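/- Let X be a compact Hausdorff space and ν ∈ O(X). Then the fiber (μ_O X)⁻¹(ν) = {Λ ∈ O(O(X)) : Λ(π_φ) = ν(φ) for all φ ∈ C(X)} is nonempty and has a greatest element and a least element with respect to the pointwise order on functionals (Λ₁ ≤ Λ₂ iff Λ₁(Φ) ≤ Λ₂(Φ) for all Φ ∈ C(O(X))); namely, the pointwise supremum and the pointwise infimum of the fiber belong to the fiber. -/

import Mathlib

/-- The set of normed, weakly additive, order-preserving functionals on `C(X, ℝ)`. -/
def OF (X : Type*) [TopologicalSpace X] : Set (C(X, ℝ) → ℝ) :=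
  {ν | ν 1 = 1 ∧ (∀ (φ : C(X, ℝ)) (c : ℝ), ν (φ + ContinuousMap.const X c) = ν φ + c) ∧
    ∀ φ ψ : C(X, ℝ), φ ≤ ψ → ν φ ≤ ν ψ}

/-- For `φ ∈ C(X, ℝ)`, the evaluation map `π_φ : O(X) → ℝ`. -/
def piO (X : Type*) [TopologicalSpace X] (φ : C(X, ℝ)) : C(↥(OF X), ℝ) :=
  ⟨fun ν => ν.1 φ, (continuous_apply φ).comp continuous_subtype_val⟩

/-- The monad multiplication `μ_O X : O(O(X)) → O(X)`, `μ_O X (M) (φ) = M (π_φ)`. -/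
def muO (X : Type*) [TopologicalSpace X] (M : ↥(OF (↥(OF X)))) : ↥(OF X) := by
  refine ⟨fun φ => M.1 (piO X φ), ?_, ?_, ?_⟩
  · have h1 : piO X (1 : C(X, ℝ)) = 1 := by
      ext ν; exact ν.2.1
    show M.1 (piO X 1) = 1
    rw [h1]; exact M.2.1
  · intro φ c
    have h : piO X (φ + ContinuousMap.const X c)
        = piO X φ + ContinuousMap.const _ c := by
      ext ν; exact ν.2.2.1 φ c
    show M.1 (piO X (φ + ContinuousMap.const X c)) = M.1 (piO X φ) + c
    rw [h]; exact M.2.2.1 _ c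
  · intro φ ψ h
    exact M.2.2.2 _ _ (fun ν => ν.2.2.2 φ ψ h)


section Helpers

variable {Y : Type*} [TopologicalSpace Y]

lemma OF_map_const {ν : C(Y, ℝ) → ℝ} (hν : ν ∈ OF Y) (c : ℝ) :
    ν (ContinuousMap.const Y c) = c := by
  have h := hν.2.1 1 (c - 1)
  have he : (1 : C(Y, ℝ)) + ContinuousMap.const Y (c - 1) = ContinuousMap.const Y c := by
    ext x; simp
  rw [he, hν.1] at h
  linarith

lemma OF_abs_le [CompactSpace Y] {ν : C(Y, ℝ) → ℝ} (hν : ν ∈ OF Y) (φ : C(Y, ℝ)) :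
    |ν φ| ≤ ‖φ‖ := by
  have hb : ∀ x : Y, -‖φ‖ ≤ φ x ∧ φ x ≤ ‖φ‖ := fun x =>
    abs_le.1 (by simpa [Real.norm_eq_abs] using φ.norm_coe_le_norm x)
  have h1 : φ ≤ ContinuousMap.const Y ‖φ‖ := fun x => (hb x).2
  have h2 : ContinuousMap.const Y (-‖φ‖) ≤ φ := fun x => (hb x).1
  have u := hν.2.2 _ _ h1
  have l := hν.2.2 _ _ h2
  rw [OF_map_const hν] at u l
  exact abs_le.2 ⟨l, u⟩

lemma isClosed_OF : IsClosed (OF Y) := by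
  have : OF Y = {ν : C(Y, ℝ) → ℝ | ν 1 = 1} ∩
      ((⋂ (φ : C(Y, ℝ)) (c : ℝ),
        {ν | ν (φ + ContinuousMap.const Y c) = ν φ + c}) ∩
       ⋂ (φ : C(Y, ℝ)) (ψ : C(Y, ℝ)) (_ : φ ≤ ψ), {ν | ν φ ≤ ν ψ}) := by
    ext ν
    simp only [OF, Set.mem_setOf_eq, Set.mem_inter_iff, Set.mem_iInter]
  rw [this]
  refine IsClosed.inter (isClosed_eq (continuous_apply _) continuous_const) (IsClosed.inter ?_ ?_)
  · exact isClosed_iInter fun φ => isClosed_iInter fun c =>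
      isClosed_eq (continuous_apply _) ((continuous_apply _).add continuous_const)
  · exact isClosed_iInter fun φ => isClosed_iInter fun ψ => isClosed_iInter fun _ =>
      isClosed_le (continuous_apply _) (continuous_apply _)

lemma compactSpace_OF [CompactSpace Y] : CompactSpace ↥(OF Y) := by
  rw [← isCompact_iff_compactSpace]
  refine IsCompact.of_isClosed_subset
    (isCompact_univ_pi fun φ : C(Y, ℝ) => isCompact_Icc (a := -‖φ‖) (b := ‖φ‖))
    isClosed_OF ?_
  intro ν hν
  intro φ _
  exact abs_le.1 (OF_abs_le hν φ)

end Helpers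

/-- For any `ν ∈ O(X)`, the fiber `(μ_O X)⁻¹(ν)` is nonempty, and its pointwise supremum
and pointwise infimum belong to the fiber; they are respectively the greatest and least
elements of the fiber in the pointwise order on functionals. -/
theorem muO_fiber_has_greatest_and_least (X : Type*) [TopologicalSpace X] [CompactSpace X]
    [T2Space X] (ν : ↥(OF X)) :
    (muO X ⁻¹' {ν}).Nonempty ∧
    (∃ Λsup ∈ muO X ⁻¹' {ν},
      Λsup.1 = (fun Φ : C(↥(OF X), ℝ) =>
        sSup ((fun Λ : ↥(OF (↥(OF X))) => Λ.1 Φ) '' (muO X ⁻¹' {ν}))) ∧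
      ∀ Λ ∈ muO X ⁻¹' {ν}, ∀ Φ : C(↥(OF X), ℝ), Λ.1 Φ ≤ Λsup.1 Φ) ∧
    (∃ Λinf ∈ muO X ⁻¹' {ν},
      Λinf.1 = (fun Φ : C(↥(OF X), ℝ) =>
        sInf ((fun Λ : ↥(OF (↥(OF X))) => Λ.1 Φ) '' (muO X ⁻¹' {ν}))) ∧
      ∀ Λ ∈ muO X ⁻¹' {ν}, ∀ Φ : C(↥(OF X), ℝ), Λinf.1 Φ ≤ Λ.1 Φ) := by
  haveI : CompactSpace ↥(OF X) := compactSpace_OF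
  set F := muO X ⁻¹' {ν} with hF
  have hδmem : (fun Φ : C(↥(OF X), ℝ) => Φ ν) ∈ OF ↥(OF X) := by
    refine ⟨by simp, fun Φ c => by simp, fun Φ Ψ h => h ν⟩
  set δ : ↥(OF ↥(OF X)) := ⟨_, hδmem⟩ with hδ
  have hδF : δ ∈ F := by
    show muO X δ = ν
    exact Subtype.ext (funext fun φ => rfl)
  have hne : F.Nonempty := ⟨δ, hδF⟩
  have himne : ∀ Φ : C(↥(OF X), ℝ),
      ((fun Λ : ↥(OF ↥(OF X)) => Λ.1 Φ) '' F).Nonempty := fun Φ => ⟨_, δ, hδF, rfl⟩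
  have hbddA : ∀ Φ : C(↥(OF X), ℝ),
      BddAbove ((fun Λ : ↥(OF ↥(OF X)) => Λ.1 Φ) '' F) := fun Φ =>
    ⟨‖Φ‖, by rintro x ⟨Λ, _, rfl⟩; exact (abs_le.1 (OF_abs_le Λ.2 Φ)).2⟩
  have hbddB : ∀ Φ : C(↥(OF X), ℝ),
      BddBelow ((fun Λ : ↥(OF ↥(OF X)) => Λ.1 Φ) '' F) := fun Φ =>
    ⟨-‖Φ‖, by rintro x ⟨Λ, _, rfl⟩; exact (abs_le.1 (OF_abs_le Λ.2 Φ)).1⟩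
  have heval : ∀ Λ ∈ F, ∀ φ : C(X, ℝ), Λ.1 (piO X φ) = ν.1 φ := by
    intro Λ hΛ φ
    have h : muO X Λ = ν := hΛ
    exact congrFun (congrArg Subtype.val h) φ
  have hsupmem : (fun Φ : C(↥(OF X), ℝ) =>
      sSup ((fun Λ : ↥(OF ↥(OF X)) => Λ.1 Φ) '' F)) ∈ OF ↥(OF X) := by
    refine ⟨?_, ?_, ?_⟩
    · apply le_antisymm
      · exact csSup_le (himne 1) (by rintro x ⟨Λ, _, rfl⟩; exact Λ.2.1.le)
      · exact le_csSup (hbddA 1) ⟨δ, hδF, δ.2.1⟩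
    · intro Φ c
      apply le_antisymm
      · refine csSup_le (himne _) ?_
        rintro x ⟨Λ, hΛ, rfl⟩
        show Λ.1 (Φ + ContinuousMap.const _ c) ≤ _
        rw [Λ.2.2.1 Φ c]
        exact add_le_add (le_csSup (hbddA Φ) ⟨Λ, hΛ, rfl⟩) le_rfl
      · refine le_sub_iff_add_le.mp (csSup_le (himne Φ) ?_)
        rintro x ⟨Λ, hΛ, rfl⟩
        show Λ.1 Φ ≤ _ - c
        rw [le_sub_iff_add_le, ← Λ.2.2.1 Φ c]
        exact le_csSup (hbddA _) ⟨Λ, hΛ, rfl⟩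
    · intro Φ Ψ h
      refine csSup_le (himne Φ) ?_
      rintro x ⟨Λ, hΛ, rfl⟩
      exact (Λ.2.2.2 Φ Ψ h).trans (le_csSup (hbddA Ψ) ⟨Λ, hΛ, rfl⟩)
  have hinfmem : (fun Φ : C(↥(OF X), ℝ) =>
      sInf ((fun Λ : ↥(OF ↥(OF X)) => Λ.1 Φ) '' F)) ∈ OF ↥(OF X) := by
    refine ⟨?_, ?_, ?_⟩
    · apply le_antisymm
      · exact csInf_le (hbddB 1) ⟨δ, hδF, δ.2.1⟩
      · exact le_csInf (himne 1) (by rintro x ⟨Λ, _, rfl⟩; exact Λ.2.1.ge)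
    · intro Φ c
      apply le_antisymm
      · refine sub_le_iff_le_add.mp (le_csInf (himne Φ) ?_)
        rintro x ⟨Λ, hΛ, rfl⟩
        show _ - c ≤ Λ.1 Φ
        rw [sub_le_iff_le_add, ← Λ.2.2.1 Φ c]
        exact csInf_le (hbddB _) ⟨Λ, hΛ, rfl⟩
      · refine le_csInf (himne _) ?_
        rintro x ⟨Λ, hΛ, rfl⟩
        show _ ≤ Λ.1 (Φ + ContinuousMap.const _ c)
        rw [Λ.2.2.1 Φ c]
        exact add_le_add (csInf_le (hbddB Φ) ⟨Λ, hΛ, rfl⟩) le_rfl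
    · intro Φ Ψ h
      refine le_csInf (himne Ψ) ?_
      rintro x ⟨Λ, hΛ, rfl⟩
      exact (csInf_le (hbddB Φ) ⟨Λ, hΛ, rfl⟩).trans (Λ.2.2.2 Φ Ψ h)
  refine ⟨hne, ⟨⟨_, hsupmem⟩, ?_, rfl, fun Λ hΛ Φ => le_csSup (hbddA Φ) ⟨Λ, hΛ, rfl⟩⟩,
    ⟨⟨_, hinfmem⟩, ?_, rfl, fun Λ hΛ Φ => csInf_le (hbddB Φ) ⟨Λ, hΛ, rfl⟩⟩⟩
  · show muO X _ = ν
    refine Subtype.ext (funext fun φ => ?_)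
    show sSup ((fun Λ : ↥(OF ↥(OF X)) => Λ.1 (piO X φ)) '' F) = ν.1 φ
    apply le_antisymm
    · exact csSup_le (himne _) (by rintro x ⟨Λ, hΛ, rfl⟩; exact (heval Λ hΛ φ).le)
    · exact le_csSup (hbddA _) ⟨δ, hδF, heval δ hδF φ⟩
  · show muO X _ = ν
    refine Subtype.ext (funext fun φ => ?_)
    show sInf ((fun Λ : ↥(OF ↥(OF X)) => Λ.1 (piO X φ)) '' F) = ν.1 φ
    apply le_antisymm
    · exact csInf_le (hbddB _) ⟨δ, hδF, heval δ hδF φ⟩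
    · exact le_csInf (himne _) (by rintro x ⟨Λ, hΛ, rfl⟩; exact (heval Λ hΛ φ).ge)
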